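/- For every a ∈ ℤ^ℓ, b ∈ ℤⁿ, j ∈ {1,…,n} and every i ∈ {1,…,ℓ}, k ∈ {1,…,n}, the shift operators satisfy the identities σ_{s_i}(v_{a,b,j}) = v_{a−e_i, b, j} and σ_{ν_k}(v_{a,b,j}) = v_{a, b+e_k, j}, where e_i, e_k are standard basis vectors. Consequently the submodule V_A ⊆ O(X_A) is invariant under all operators σ_{s_i}, σ_{ν_k} and their inverses, so these operators descend to additive bijections of the quotient O(X_A)/V_A. -/

import Mathlib

set_option maxHeartbeats 1000000
set_option synthInstance.maxHeartbeats 400000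

noncomputable section

open MvPolynomial

/-- The polynomial ring ℂ[s₁,…,s_ℓ,ν₁,…,νₙ]. -/
abbrev PRing (l n : ℕ) : Type := MvPolynomial (Fin l ⊕ Fin n) ℂ

/-- The rational function field K = ℂ(s₁,…,s_ℓ,ν₁,…,νₙ). -/
abbrev KK (l n : ℕ) : Type := FractionRing (PRing l n)

/-- The generator s_i of K. -/
def sGen (l n : ℕ) (i : Fin l) : KK l n :=
  algebraMap (PRing l n) (KK l n) (X (Sum.inl i))

/-- The generator ν_j of K. -/
def nuGen (l n : ℕ) (j : Fin n) : KK l n :=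
  algebraMap (PRing l n) (KK l n) (X (Sum.inr j))

/-- The Laurent polynomial ring A[x₁^{±1},…,xₙ^{±1}]. -/
abbrev Laur (n : ℕ) (A : Type) [CommRing A] : Type :=
  AddMonoidAlgebra A (Fin n → ℤ)

/-- The Laurent monomial x^b. -/
def lmono {n : ℕ} {A : Type} [CommRing A] (b : Fin n → ℤ) : Laur n A :=
  AddMonoidAlgebra.single b 1

/-- The partial derivative ∂/∂x_j of a Laurent polynomial. -/
def lpderiv {n : ℕ} {A : Type} [CommRing A] (j : Fin n) (f : Laur n A) : Laur n A :=
  Finsupp.sum f.coeff fun m c => AddMonoidAlgebra.single (m - Pi.single j 1) ((m j : A) * c)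

/-- Coefficientwise map of Laurent polynomial rings along a ring homomorphism. -/
def laurMap {n : ℕ} {A B : Type} [CommRing A] [CommRing B] (φ : A →+* B) :
    Laur n A →+* Laur n B where
  toFun g := AddMonoidAlgebra.ofCoeff (Finsupp.mapRange φ φ.map_zero g.coeff)
  map_one' := (AddMonoidAlgebra.mapRingHom (Fin n → ℤ) φ).map_one
  map_mul' := (AddMonoidAlgebra.mapRingHom (Fin n → ℤ) φ).map_mul
  map_zero' := (AddMonoidAlgebra.mapRingHom (Fin n → ℤ) φ).map_zero
  map_add' := (AddMonoidAlgebra.mapRingHom (Fin n → ℤ) φ).map_add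

end

noncomputable section
/-- The inclusion ℂ → K. -/
def cC (l n : ℕ) : ℂ →+* KK l n := (algebraMap (PRing l n) (KK l n)).comp MvPolynomial.C

/-- The coefficient map ℂ → A obtained from κ : K → A. -/
def cmap {l n : ℕ} {A : Type} [CommRing A] (κ : KK l n →+* A) : ℂ →+* A :=
  κ.comp (cC l n)

/-- The image of the Laurent polynomial f_i in A[x^{±1}]. -/
def fImg {l n : ℕ} (f : Fin l → Laur n ℂ) {A : Type} [CommRing A] (κ : KK l n →+* A)
    (i : Fin l) : Laur n A := laurMap (cmap κ) (f i)

/-- The product f₁ ⋯ f_ℓ in A[x^{±1}]. -/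
def FProd {l n : ℕ} (f : Fin l → Laur n ℂ) {A : Type} [CommRing A] (κ : KK l n →+* A) :
    Laur n A := ∏ i, fImg f κ i

/-- O(X_A) = A[x₁^{±1},…,xₙ^{±1}] localized at f₁⋯f_ℓ. -/
abbrev OX {l n : ℕ} (f : Fin l → Laur n ℂ) {A : Type} [CommRing A] (κ : KK l n →+* A) :
    Type := Localization.Away (FProd f κ)

end

noncomputable section

/-- x_j as a unit of O(X_A). -/
def xU {l n : ℕ} (f : Fin l → Laur n ℂ) {A : Type} [CommRing A] (κ : KK l n →+* A)
    (j : Fin n) : (OX f κ)ˣ where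
  val := algebraMap (Laur n A) (OX f κ) (lmono (Pi.single j 1))
  inv := algebraMap (Laur n A) (OX f κ) (lmono (-Pi.single j 1))
  val_inv := by
    rw [← map_mul]
    simp only [lmono, AddMonoidAlgebra.single_mul_single, add_neg_cancel, one_mul]
    rw [← AddMonoidAlgebra.one_def, map_one]
  inv_val := by
    rw [← map_mul]
    simp only [lmono, AddMonoidAlgebra.single_mul_single, neg_add_cancel, one_mul]
    rw [← AddMonoidAlgebra.one_def, map_one]

lemma fImg_isUnit {l n : ℕ} (f : Fin l → Laur n ℂ) {A : Type} [CommRing A]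
    (κ : KK l n →+* A) (i : Fin l) :
    IsUnit (algebraMap (Laur n A) (OX f κ) (fImg f κ i)) := by
  have h : fImg f κ i ∣ FProd f κ := Finset.dvd_prod_of_mem _ (Finset.mem_univ i)
  exact IsLocalization.Away.isUnit_of_dvd (x := FProd f κ) (S := OX f κ) h

/-- f_i as a unit of O(X_A). -/
def fU {l n : ℕ} (f : Fin l → Laur n ℂ) {A : Type} [CommRing A] (κ : KK l n →+* A)
    (i : Fin l) : (OX f κ)ˣ := (fImg_isUnit f κ i).unit

/-- f^a = f₁^{a₁} ⋯ f_ℓ^{a_ℓ} for an integer vector a. -/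
def fpow {l n : ℕ} (f : Fin l → Laur n ℂ) {A : Type} [CommRing A] (κ : KK l n →+* A)
    (a : Fin l → ℤ) : OX f κ := ↑(∏ i, (fU f κ i) ^ (a i))

end

noncomputable section
/-- The element
v_{a,b,j} = x₁⋯xₙ · f^a · x^b · ((ν_j + δ b_j) x_j^{-1} - Σ_i (s_i - δ a_i) f_i^{-1} ∂f_i/∂x_j)
of O(X_A). -/
def vElt {l n : ℕ} (f : Fin l → Laur n ℂ) {A : Type} [CommRing A] (κ : KK l n →+* A)
    (δ : A) (a : Fin l → ℤ) (b : Fin n → ℤ) (j : Fin n) : OX f κ :=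
  algebraMap (Laur n A) (OX f κ) (lmono fun _ => 1) * fpow f κ a *
    algebraMap (Laur n A) (OX f κ) (lmono b) *
    (algebraMap A (OX f κ) (κ (nuGen l n j) + δ * (b j : A)) * ↑(xU f κ j)⁻¹ -
      ∑ i : Fin l, algebraMap A (OX f κ) (κ (sGen l n i) - δ * (a i : A)) *
        (↑(fU f κ i)⁻¹ * algebraMap (Laur n A) (OX f κ) (lpderiv j (fImg f κ i))))

/-- The A-submodule V_A ⊆ O(X_A) spanned by the elements v_{a,b,j}. -/
def VA {l n : ℕ} (f : Fin l → Laur n ℂ) {A : Type} [CommRing A] (κ : KK l n →+* A)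
    (δ : A) : Submodule A (OX f κ) :=
  Submodule.span A {g | ∃ a b j, g = vElt f κ δ a b j}

/-- The generator w_j = ν_j x_j^{-1} - Σ_i s_i f_i^{-1} ∂f_i/∂x_j of the
likelihood ideal, in O(X_K). -/
def wElt {l n : ℕ} (f : Fin l → Laur n ℂ) (j : Fin n) :
    OX f (RingHom.id (KK l n)) :=
  algebraMap (KK l n) (OX f (RingHom.id (KK l n))) (nuGen l n j) *
      ↑(xU f (RingHom.id (KK l n)) j)⁻¹ -
    ∑ i : Fin l, algebraMap (KK l n) (OX f (RingHom.id (KK l n))) (sGen l n i) *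
      (↑(fU f (RingHom.id (KK l n)) i)⁻¹ *
        algebraMap (Laur n (KK l n)) (OX f (RingHom.id (KK l n)))
          (lpderiv j (fImg f (RingHom.id (KK l n)) i)))

/-- The likelihood ideal I_K ⊆ O(X_K). -/
def likeIdeal {l n : ℕ} (f : Fin l → Laur n ℂ) : Ideal (OX f (RingHom.id (KK l n))) :=
  Ideal.span {g | ∃ j, g = wElt f j}
end

noncomputable section
/-- The generators (s₁,…,s_ℓ,ν₁,…,νₙ) of K. -/
def genK (l n : ℕ) : (Fin l ⊕ Fin n) → KK l n := Sum.elim (sGen l n) (nuGen l n)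

lemma laurMap_comp_apply {n : ℕ} {A B C : Type} [CommRing A] [CommRing B] [CommRing C]
    (θ : B →+* C) (φ : A →+* B) (g : Laur n A) :
    laurMap θ (laurMap φ g) = laurMap (θ.comp φ) g := by
  show AddMonoidAlgebra.ofCoeff (Finsupp.mapRange θ θ.map_zero
    (Finsupp.mapRange φ φ.map_zero g.coeff)) = _
  rw [← Finsupp.mapRange_comp (h := by simp)]
  rfl

lemma laurMap_FProd {l n : ℕ} (f : Fin l → Laur n ℂ) {A B : Type} [CommRing A] [CommRing B]
    (κ₁ : KK l n →+* A) (κ₂ : KK l n →+* B) (θ : A →+* B)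
    (hθ : θ.comp (cmap κ₁) = cmap κ₂) :
    laurMap θ (FProd f κ₁) = FProd f κ₂ := by
  rw [FProd, map_prod]
  refine Finset.prod_congr rfl fun i _ => ?_
  show laurMap θ (laurMap (cmap κ₁) (f i)) = laurMap (cmap κ₂) (f i)
  rw [laurMap_comp_apply, hθ]

/-- The coefficientwise ring homomorphism O(X_A) → O(X_B) induced by a ring
homomorphism θ : A → B compatible with the coefficient maps. -/
def OXmap {l n : ℕ} (f : Fin l → Laur n ℂ) {A B : Type} [CommRing A] [CommRing B]
    (κ₁ : KK l n →+* A) (κ₂ : KK l n →+* B) (θ : A →+* B)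
    (hθ : θ.comp (cmap κ₁) = cmap κ₂) : OX f κ₁ →+* OX f κ₂ :=
  Localization.awayLift ((algebraMap (Laur n B) (OX f κ₂)).comp (laurMap θ)) (FProd f κ₁)
    (by
      rw [RingHom.comp_apply, laurMap_FProd f κ₁ κ₂ θ hθ]
      exact IsLocalization.Away.algebraMap_isUnit _)
end


noncomputable section Aux

open MvPolynomial

variable {l n : ℕ} {A : Type} [CommRing A]

lemma laurMap_single {B : Type} [CommRing B] (φ : A →+* B) (m : Fin n → ℤ) (c : A) :
    laurMap φ (AddMonoidAlgebra.single m c) = AddMonoidAlgebra.single m (φ c) := by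
  show AddMonoidAlgebra.ofCoeff (Finsupp.mapRange φ φ.map_zero (Finsupp.single m c)) =
    AddMonoidAlgebra.single m (φ c)
  rw [Finsupp.mapRange_single]
  rfl

lemma laurMap_lmono {B : Type} [CommRing B] (φ : A →+* B) (b : Fin n → ℤ) :
    laurMap φ (lmono b) = lmono b := by
  rw [lmono, laurMap_single, map_one, lmono]

lemma laurMap_id (g : Laur n A) : laurMap (RingHom.id A) g = g := by
  show AddMonoidAlgebra.ofCoeff _ = AddMonoidAlgebra.ofCoeff g.coeff
  congr 1
  refine Finsupp.ext fun m => ?_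
  rfl

lemma laurMap_fImg (f : Fin l → Laur n ℂ) (κ : KK l n →+* A) (θ : A →+* A)
    (hθ : θ.comp (cmap κ) = cmap κ) (i : Fin l) :
    laurMap θ (fImg f κ i) = fImg f κ i := by
  rw [fImg, laurMap_comp_apply, hθ]

lemma laurMap_lpderiv {B : Type} [CommRing B] (φ : A →+* B) (j : Fin n) (g : Laur n A) :
    laurMap φ (lpderiv j g) = lpderiv j (laurMap φ g) := by
  rw [lpderiv, lpderiv]
  show laurMap φ _ = Finsupp.sum (Finsupp.mapRange φ φ.map_zero g.coeff) _
  rw [Finsupp.sum_mapRange_index (fun m => by simp)]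
  rw [Finsupp.sum, Finsupp.sum]
  rw [map_sum]
  refine Finset.sum_congr rfl fun m _ => ?_
  rw [laurMap_single, map_mul, map_intCast]

lemma OXmap_algebraMap (f : Fin l → Laur n ℂ) {B : Type} [CommRing B]
    (κ₁ : KK l n →+* A) (κ₂ : KK l n →+* B) (θ : A →+* B)
    (hθ : θ.comp (cmap κ₁) = cmap κ₂) (g : Laur n A) :
    OXmap f κ₁ κ₂ θ hθ (algebraMap (Laur n A) (OX f κ₁) g) =
      algebraMap (Laur n B) (OX f κ₂) (laurMap θ g) := by
  rw [OXmap]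
  exact IsLocalization.Away.lift_eq (FProd f κ₁) _ g

lemma OXmap_algA (f : Fin l → Laur n ℂ) (κ : KK l n →+* A) (θ : A →+* A)
    (hθ : θ.comp (cmap κ) = cmap κ) (c : A) :
    OXmap f κ κ θ hθ (algebraMap A (OX f κ) c) = algebraMap A (OX f κ) (θ c) := by
  rw [IsScalarTower.algebraMap_eq A (Laur n A) (OX f κ), RingHom.comp_apply,
    RingHom.comp_apply, OXmap_algebraMap]
  congr 1
  rw [show (algebraMap A (Laur n A)) c = AddMonoidAlgebra.single 0 c by
    rw [AddMonoidAlgebra.coe_algebraMap]; simp,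
    laurMap_single,
    show (algebraMap A (Laur n A)) (θ c) = AddMonoidAlgebra.single 0 (θ c) by
    rw [AddMonoidAlgebra.coe_algebraMap]; simp]

lemma OXmap_smul (f : Fin l → Laur n ℂ) (κ : KK l n →+* A) (θ : A →+* A)
    (hθ : θ.comp (cmap κ) = cmap κ) (c : A) (g : OX f κ) :
    OXmap f κ κ θ hθ (c • g) = θ c • OXmap f κ κ θ hθ g := by
  have h1 : c • g = algebraMap A (OX f κ) c * g := Algebra.smul_def c g
  have h2 : θ c • OXmap f κ κ θ hθ g
      = algebraMap A (OX f κ) (θ c) * OXmap f κ κ θ hθ g :=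
    Algebra.smul_def (θ c) (OXmap f κ κ θ hθ g)
  rw [h1, h2, map_mul, OXmap_algA]

lemma OXmap_xU (f : Fin l → Laur n ℂ) (κ : KK l n →+* A) (θ : A →+* A)
    (hθ : θ.comp (cmap κ) = cmap κ) (j : Fin n) :
    Units.map (OXmap f κ κ θ hθ).toMonoidHom (xU f κ j) = xU f κ j := by
  ext
  show OXmap f κ κ θ hθ ((xU f κ j).val) = (xU f κ j).val
  rw [xU, OXmap_algebraMap, laurMap_lmono]

lemma OXmap_xU_inv (f : Fin l → Laur n ℂ) (κ : KK l n →+* A) (θ : A →+* A)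
    (hθ : θ.comp (cmap κ) = cmap κ) (j : Fin n) :
    OXmap f κ κ θ hθ ↑(xU f κ j)⁻¹ = ↑(xU f κ j)⁻¹ := by
  rw [show (OXmap f κ κ θ hθ ↑(xU f κ j)⁻¹ : OX f κ)
      = ↑(Units.map (OXmap f κ κ θ hθ).toMonoidHom (xU f κ j)⁻¹) from rfl,
    map_inv, OXmap_xU]

lemma OXmap_fU (f : Fin l → Laur n ℂ) (κ : KK l n →+* A) (θ : A →+* A)
    (hθ : θ.comp (cmap κ) = cmap κ) (i : Fin l) :
    Units.map (OXmap f κ κ θ hθ).toMonoidHom (fU f κ i) = fU f κ i := by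
  ext
  show OXmap f κ κ θ hθ ((fU f κ i).val) = (fU f κ i).val
  rw [fU, IsUnit.unit_spec, OXmap_algebraMap, laurMap_fImg f κ θ hθ]

lemma OXmap_fU_inv (f : Fin l → Laur n ℂ) (κ : KK l n →+* A) (θ : A →+* A)
    (hθ : θ.comp (cmap κ) = cmap κ) (i : Fin l) :
    OXmap f κ κ θ hθ ↑(fU f κ i)⁻¹ = ↑(fU f κ i)⁻¹ := by
  rw [show (OXmap f κ κ θ hθ ↑(fU f κ i)⁻¹ : OX f κ)
      = ↑(Units.map (OXmap f κ κ θ hθ).toMonoidHom (fU f κ i)⁻¹) from rfl,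
    map_inv, OXmap_fU]

lemma OXmap_fpow (f : Fin l → Laur n ℂ) (κ : KK l n →+* A) (θ : A →+* A)
    (hθ : θ.comp (cmap κ) = cmap κ) (a : Fin l → ℤ) :
    OXmap f κ κ θ hθ (fpow f κ a) = fpow f κ a := by
  rw [fpow, show (OXmap f κ κ θ hθ ↑(∏ i, (fU f κ i) ^ (a i)) : OX f κ)
      = ↑(Units.map (OXmap f κ κ θ hθ).toMonoidHom (∏ i, (fU f κ i) ^ (a i))) from rfl,
    map_prod]
  congr 1
  refine Finset.prod_congr rfl fun i _ => ?_
  rw [map_zpow, OXmap_fU]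

lemma fpow_sub_single (f : Fin l → Laur n ℂ) (κ : KK l n →+* A) (a : Fin l → ℤ) (i : Fin l) :
    fpow f κ (a - Pi.single i 1) = ↑(fU f κ i)⁻¹ * fpow f κ a := by
  rw [fpow, fpow, show (↑(fU f κ i)⁻¹ : OX f κ) = ((fU f κ i)⁻¹ : (OX f κ)ˣ) from rfl,
    ← Units.val_mul]
  congr 1
  have h1 : ∀ i' : Fin l, (fU f κ i') ^ ((a - Pi.single i 1 : Fin l → ℤ) i')
      = (fU f κ i') ^ (-((Pi.single i 1 : Fin l → ℤ) i')) * (fU f κ i') ^ (a i') :=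
    fun i' => by
    rw [← zpow_add]
    congr 1
    simp only [Pi.sub_apply]
    ring
  rw [Finset.prod_congr rfl fun i' _ => h1 i', Finset.prod_mul_distrib]
  congr 1
  rw [Finset.prod_eq_single i (fun i' _ hne => by
      rw [Pi.single_eq_of_ne hne]; simp) (by simp)]
  rw [Pi.single_eq_same, zpow_neg, zpow_one]

lemma OXmap_inv2 (f : Fin l → Laur n ℂ) (κ : KK l n →+* A) (θ θ' : A →+* A)
    (hθ : θ.comp (cmap κ) = cmap κ) (hθ' : θ'.comp (cmap κ) = cmap κ)
    (hid : ∀ x, θ' (θ x) = x) (g : OX f κ) :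
    OXmap f κ κ θ' hθ' (OXmap f κ κ θ hθ g) = g := by
  have h2 : θ'.comp θ = RingHom.id A := RingHom.ext hid
  have hcomp : (OXmap f κ κ θ' hθ').comp (OXmap f κ κ θ hθ) = RingHom.id (OX f κ) := by
    refine IsLocalization.ringHom_ext (Submonoid.powers (FProd f κ)) (RingHom.ext fun x => ?_)
    simp only [RingHom.comp_apply, RingHom.id_apply, OXmap_algebraMap, laurMap_comp_apply,
      h2, laurMap_id]
  exact RingHom.congr_fun hcomp g

lemma OXmap_vElt (f : Fin l → Laur n ℂ) (κ : KK l n →+* A) (δ : A) (θ : A →+* A)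
    (hθ : θ.comp (cmap κ) = cmap κ) (hδ : θ δ = δ)
    (a : Fin l → ℤ) (b : Fin n → ℤ) (j : Fin n) :
    OXmap f κ κ θ hθ (vElt f κ δ a b j) =
      algebraMap (Laur n A) (OX f κ) (lmono fun _ => 1) * fpow f κ a *
        algebraMap (Laur n A) (OX f κ) (lmono b) *
        (algebraMap A (OX f κ) (θ (κ (nuGen l n j)) + δ * (b j : A)) * ↑(xU f κ j)⁻¹ -
          ∑ i : Fin l, algebraMap A (OX f κ) (θ (κ (sGen l n i)) - δ * (a i : A)) *
            (↑(fU f κ i)⁻¹ * algebraMap (Laur n A) (OX f κ) (lpderiv j (fImg f κ i)))) := by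
  rw [vElt, map_mul, map_mul, map_mul, map_sub, map_sum, OXmap_algebraMap,
    OXmap_algebraMap, laurMap_lmono, laurMap_lmono, OXmap_fpow, map_mul, OXmap_algA,
    OXmap_xU_inv]
  congr 2
  · rw [map_add, map_mul, hδ, map_intCast]
  · refine Finset.sum_congr rfl fun i _ => ?_
    rw [map_mul, map_mul, OXmap_algA, OXmap_fU_inv, OXmap_algebraMap, laurMap_lpderiv,
      laurMap_fImg f κ θ hθ, map_sub, map_mul, hδ, map_intCast]


lemma OXmap_fU_val (f : Fin l → Laur n ℂ) (κ : KK l n →+* A) (θ : A →+* A)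
    (hθ : θ.comp (cmap κ) = cmap κ) (i : Fin l) :
    OXmap f κ κ θ hθ ↑(fU f κ i) = ↑(fU f κ i) := by
  rw [show (OXmap f κ κ θ hθ ↑(fU f κ i) : OX f κ)
      = ↑(Units.map (OXmap f κ κ θ hθ).toMonoidHom (fU f κ i)) from rfl, OXmap_fU]

lemma OXmap_xU_val (f : Fin l → Laur n ℂ) (κ : KK l n →+* A) (θ : A →+* A)
    (hθ : θ.comp (cmap κ) = cmap κ) (k : Fin n) :
    OXmap f κ κ θ hθ ↑(xU f κ k) = ↑(xU f κ k) := by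
  rw [show (OXmap f κ κ θ hθ ↑(xU f κ k) : OX f κ)
      = ↑(Units.map (OXmap f κ κ θ hθ).toMonoidHom (xU f κ k)) from rfl, OXmap_xU]

lemma shift_s_eq (f : Fin l → Laur n ℂ) (κ : KK l n →+* A) (δ : A) (i : Fin l)
    (θ : A →+* A) (hθ : θ.comp (cmap κ) = cmap κ) (hδ : θ δ = δ)
    (hτ : ∀ p : PRing l n, θ (κ (algebraMap (PRing l n) (KK l n) p)) =
      MvPolynomial.eval₂ (cmap κ)
        (fun w => κ (genK l n w) + if w = Sum.inl i then δ else 0) p)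
    (a : Fin l → ℤ) (b : Fin n → ℤ) (j : Fin n) :
    ↑(fU f κ i)⁻¹ * OXmap f κ κ θ hθ (vElt f κ δ a b j) =
      vElt f κ δ (a - Pi.single i 1) b j := by
  have hnu : θ (κ (nuGen l n j)) = κ (nuGen l n j) := by
    have h := hτ (X (Sum.inr j))
    rw [eval₂_X] at h
    simpa [nuGen, genK] using h
  have hs : ∀ i' : Fin l, θ (κ (sGen l n i')) - δ * (a i' : A)
      = κ (sGen l n i') - δ * (((a - Pi.single i 1 : Fin l → ℤ) i' : ℤ) : A) := by
    intro i'
    have h := hτ (X (Sum.inl i'))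
    rw [eval₂_X] at h
    simp only [genK, Sum.elim_inl, Sum.inl.injEq] at h
    rw [show θ (κ (sGen l n i')) = κ (sGen l n i') + if i' = i then δ else 0 from h]
    by_cases hii : i' = i
    · subst hii
      simp only [if_pos rfl, Pi.sub_apply, Pi.single_eq_same]
      push_cast
      ring
    · simp only [if_neg hii, Pi.sub_apply, Pi.single_eq_of_ne hii]
      push_cast
      ring
  rw [OXmap_vElt f κ δ θ hθ hδ, vElt, fpow_sub_single, hnu]
  simp only [hs]
  ring

lemma shift_nu_eq (f : Fin l → Laur n ℂ) (κ : KK l n →+* A) (δ : A) (k : Fin n)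
    (θ : A →+* A) (hθ : θ.comp (cmap κ) = cmap κ) (hδ : θ δ = δ)
    (hτ : ∀ p : PRing l n, θ (κ (algebraMap (PRing l n) (KK l n) p)) =
      MvPolynomial.eval₂ (cmap κ)
        (fun w => κ (genK l n w) + if w = Sum.inr k then δ else 0) p)
    (a : Fin l → ℤ) (b : Fin n → ℤ) (j : Fin n) :
    ↑(xU f κ k) * OXmap f κ κ θ hθ (vElt f κ δ a b j) =
      vElt f κ δ a (b + Pi.single k 1) j := by
  have hsg : ∀ i' : Fin l, θ (κ (sGen l n i')) = κ (sGen l n i') := by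
    intro i'
    have h := hτ (X (Sum.inl i'))
    rw [eval₂_X] at h
    simpa [sGen, genK] using h
  have hnu : θ (κ (nuGen l n j)) + δ * (b j : A)
      = κ (nuGen l n j) + δ * (((b + Pi.single k 1 : Fin n → ℤ) j : ℤ) : A) := by
    have h := hτ (X (Sum.inr j))
    rw [eval₂_X] at h
    simp only [genK, Sum.elim_inr, Sum.inr.injEq] at h
    rw [show θ (κ (nuGen l n j)) = κ (nuGen l n j) + if j = k then δ else 0 from h]
    by_cases hjk : j = k
    · subst hjk
      simp only [if_pos rfl, Pi.add_apply, Pi.single_eq_same]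
      push_cast
      ring
    · simp only [if_neg hjk, Pi.add_apply, Pi.single_eq_of_ne hjk]
      push_cast
      ring
  have hx : algebraMap (Laur n A) (OX f κ) (lmono (b + Pi.single k 1))
      = algebraMap (Laur n A) (OX f κ) (lmono b) * ↑(xU f κ k) := by
    rw [show (↑(xU f κ k) : OX f κ)
        = algebraMap (Laur n A) (OX f κ) (lmono (Pi.single k 1)) from rfl, ← map_mul]
    congr 1
    rw [lmono, lmono, lmono, AddMonoidAlgebra.single_mul_single, one_mul]
  rw [OXmap_vElt f κ δ θ hθ hδ, vElt, hx, hnu]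
  simp only [hsg]
  ring

lemma VA_invariant (f : Fin l → Laur n ℂ) (κ : KK l n →+* A) (δ : A)
    (θ : A →+* A) (hθ : θ.comp (cmap κ) = cmap κ) (u : OX f κ)
    (hgen : ∀ a b j, u * OXmap f κ κ θ hθ (vElt f κ δ a b j) ∈ VA f κ δ) :
    ∀ g ∈ VA f κ δ, u * OXmap f κ κ θ hθ g ∈ VA f κ δ := by
  intro g hg
  refine Submodule.span_induction
    (p := fun x _ => u * OXmap f κ κ θ hθ x ∈ VA f κ δ) ?_ ?_ ?_ ?_ hg
  · rintro x ⟨a, b, j, rfl⟩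
    exact hgen a b j
  · show u * OXmap f κ κ θ hθ 0 ∈ VA f κ δ
    rw [map_zero, mul_zero]
    exact (VA f κ δ).zero_mem
  · intro x y _ _ hx hy
    show u * OXmap f κ κ θ hθ (x + y) ∈ VA f κ δ
    rw [map_add, mul_add]
    exact (VA f κ δ).add_mem hx hy
  · intro c x _ hx
    show u * OXmap f κ κ θ hθ (c • x) ∈ VA f κ δ
    have h1 : u * OXmap f κ κ θ hθ (c • x) = θ c • (u * OXmap f κ κ θ hθ x) := by
      rw [OXmap_smul]
      have h2 : θ c • OXmap f κ κ θ hθ x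
          = algebraMap A (OX f κ) (θ c) * OXmap f κ κ θ hθ x :=
        Algebra.smul_def (θ c) (OXmap f κ κ θ hθ x)
      have h3 : θ c • (u * OXmap f κ κ θ hθ x)
          = algebraMap A (OX f κ) (θ c) * (u * OXmap f κ κ θ hθ x) :=
        Algebra.smul_def (θ c) (u * OXmap f κ κ θ hθ x)
      rw [h2, h3]
      ring
    rw [h1]
    exact (VA f κ δ).smul_mem _ hx

lemma vElt_mem_VA (f : Fin l → Laur n ℂ) (κ : KK l n →+* A) (δ : A)
    (a : Fin l → ℤ) (b : Fin n → ℤ) (j : Fin n) : vElt f κ δ a b j ∈ VA f κ δ :=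
  Submodule.subset_span ⟨a, b, j, rfl⟩
end Aux
noncomputable section

/- STATEMENT 9 -/
theorem stmt9 {l n : ℕ} (hn : 1 ≤ n) (hl : 1 ≤ l)
    (f : Fin l → Laur n ℂ) (hf : ∀ i, f i ≠ 0)
    {A : Type} [CommRing A] (κ : KK l n →+* A) (δ : A)
    -- the substitution automorphisms s_i ↦ s_i + δ and ν_k ↦ ν_k + δ of A
    (τS : Fin l → A ≃+* A) (τN : Fin n → A ≃+* A)
    (hτSC : ∀ i, ((τS i : A →+* A)).comp (cmap κ) = cmap κ)
    (hτSC' : ∀ i, (((τS i).symm : A →+* A)).comp (cmap κ) = cmap κ)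
    (hτNC : ∀ k, ((τN k : A →+* A)).comp (cmap κ) = cmap κ)
    (hτNC' : ∀ k, (((τN k).symm : A →+* A)).comp (cmap κ) = cmap κ)
    (hτSδ : ∀ i, τS i δ = δ) (hτNδ : ∀ k, τN k δ = δ)
    (hτS : ∀ (i : Fin l) (p : PRing l n),
      τS i (κ (algebraMap (PRing l n) (KK l n) p)) =
        MvPolynomial.eval₂ (cmap κ)
          (fun w => κ (genK l n w) + if w = Sum.inl i then δ else 0) p)
    (hτN : ∀ (k : Fin n) (p : PRing l n),
      τN k (κ (algebraMap (PRing l n) (KK l n) p)) =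
        MvPolynomial.eval₂ (cmap κ)
          (fun w => κ (genK l n w) + if w = Sum.inr k then δ else 0) p) :
    -- σ_{s_i}(v_{a,b,j}) = v_{a-e_i,b,j}
    (∀ (i : Fin l) (a : Fin l → ℤ) (b : Fin n → ℤ) (j : Fin n),
      (↑(fU f κ i)⁻¹ : OX f κ) * OXmap f κ κ (τS i) (hτSC i) (vElt f κ δ a b j) =
        vElt f κ δ (a - Pi.single i 1) b j) ∧
    -- σ_{ν_k}(v_{a,b,j}) = v_{a,b+e_k,j}
    (∀ (k : Fin n) (a : Fin l → ℤ) (b : Fin n → ℤ) (j : Fin n),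
      (↑(xU f κ k) : OX f κ) * OXmap f κ κ (τN k) (hτNC k) (vElt f κ δ a b j) =
        vElt f κ δ a (b + Pi.single k 1) j) ∧
    -- V_A is invariant under all shift operators and their inverses
    (∀ i, ∀ g ∈ VA f κ δ,
      (↑(fU f κ i)⁻¹ : OX f κ) * OXmap f κ κ (τS i) (hτSC i) g ∈ VA f κ δ) ∧
    (∀ i, ∀ g ∈ VA f κ δ,
      OXmap f κ κ ((τS i).symm) (hτSC' i) (↑(fU f κ i) * g) ∈ VA f κ δ) ∧
    (∀ k, ∀ g ∈ VA f κ δ,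
      (↑(xU f κ k) : OX f κ) * OXmap f κ κ (τN k) (hτNC k) g ∈ VA f κ δ) ∧
    (∀ k, ∀ g ∈ VA f κ δ,
      OXmap f κ κ ((τN k).symm) (hτNC' k) ((↑(xU f κ k)⁻¹ : OX f κ) * g) ∈ VA f κ δ) ∧
    -- hence the shift operators descend to additive bijections of O(X_A)/V_A
    (∀ i g, (↑(fU f κ i)⁻¹ : OX f κ) * OXmap f κ κ (τS i) (hτSC i) g ∈ VA f κ δ →
      g ∈ VA f κ δ) ∧
    (∀ (i : Fin l) (h : OX f κ), ∃ g,
      (↑(fU f κ i)⁻¹ : OX f κ) * OXmap f κ κ (τS i) (hτSC i) g - h ∈ VA f κ δ) ∧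
    (∀ k g, (↑(xU f κ k) : OX f κ) * OXmap f κ κ (τN k) (hτNC k) g ∈ VA f κ δ →
      g ∈ VA f κ δ) ∧
    (∀ (k : Fin n) (h : OX f κ), ∃ g,
      (↑(xU f κ k) : OX f κ) * OXmap f κ κ (τN k) (hτNC k) g - h ∈ VA f κ δ) := by
  have key_s : ∀ (i : Fin l) (a : Fin l → ℤ) (b : Fin n → ℤ) (j : Fin n),
      (↑(fU f κ i)⁻¹ : OX f κ) * OXmap f κ κ (τS i) (hτSC i) (vElt f κ δ a b j) =
        vElt f κ δ (a - Pi.single i 1) b j := fun i a b j =>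
    shift_s_eq f κ δ i (τS i) (hτSC i) (hτSδ i) (fun p => hτS i p) a b j
  have key_n : ∀ (k : Fin n) (a : Fin l → ℤ) (b : Fin n → ℤ) (j : Fin n),
      (↑(xU f κ k) : OX f κ) * OXmap f κ κ (τN k) (hτNC k) (vElt f κ δ a b j) =
        vElt f κ δ a (b + Pi.single k 1) j := fun k a b j =>
    shift_nu_eq f κ δ k (τN k) (hτNC k) (hτNδ k) (fun p => hτN k p) a b j
  have hinvS : ∀ (i : Fin l) (g : OX f κ),
      OXmap f κ κ ((τS i).symm) (hτSC' i) (OXmap f κ κ (τS i) (hτSC i) g) = g := fun i g =>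
    OXmap_inv2 f κ (τS i) ((τS i).symm) (hτSC i) (hτSC' i)
      (fun x => (τS i).symm_apply_apply x) g
  have hinvS' : ∀ (i : Fin l) (g : OX f κ),
      OXmap f κ κ (τS i) (hτSC i) (OXmap f κ κ ((τS i).symm) (hτSC' i) g) = g := fun i g =>
    OXmap_inv2 f κ ((τS i).symm) (τS i) (hτSC' i) (hτSC i)
      (fun x => (τS i).apply_symm_apply x) g
  have hinvN : ∀ (k : Fin n) (g : OX f κ),
      OXmap f κ κ ((τN k).symm) (hτNC' k) (OXmap f κ κ (τN k) (hτNC k) g) = g := fun k g =>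
    OXmap_inv2 f κ (τN k) ((τN k).symm) (hτNC k) (hτNC' k)
      (fun x => (τN k).symm_apply_apply x) g
  have hinvN' : ∀ (k : Fin n) (g : OX f κ),
      OXmap f κ κ (τN k) (hτNC k) (OXmap f κ κ ((τN k).symm) (hτNC' k) g) = g := fun k g =>
    OXmap_inv2 f κ ((τN k).symm) (τN k) (hτNC' k) (hτNC k)
      (fun x => (τN k).apply_symm_apply x) g
  have key_s' : ∀ (i : Fin l) (a : Fin l → ℤ) (b : Fin n → ℤ) (j : Fin n),
      (↑(fU f κ i) : OX f κ) * OXmap f κ κ ((τS i).symm) (hτSC' i) (vElt f κ δ a b j) =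
        vElt f κ δ (a + Pi.single i 1) b j := by
    intro i a b j
    have h1 := key_s i (a + Pi.single i 1) b j
    rw [add_sub_cancel_right] at h1
    have h2 : OXmap f κ κ (τS i) (hτSC i) (vElt f κ δ (a + Pi.single i 1) b j)
        = ↑(fU f κ i) * vElt f κ δ a b j := by
      rw [← h1, Units.mul_inv_cancel_left]
    have h3 := congrArg (OXmap f κ κ ((τS i).symm) (hτSC' i)) h2
    rw [hinvS, map_mul, OXmap_fU_val] at h3
    exact h3.symm
  have key_n' : ∀ (k : Fin n) (a : Fin l → ℤ) (b : Fin n → ℤ) (j : Fin n),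
      (↑(xU f κ k)⁻¹ : OX f κ) * OXmap f κ κ ((τN k).symm) (hτNC' k) (vElt f κ δ a b j) =
        vElt f κ δ a (b - Pi.single k 1) j := by
    intro k a b j
    have h1 := key_n k a (b - Pi.single k 1) j
    rw [sub_add_cancel] at h1
    have h2 : OXmap f κ κ (τN k) (hτNC k) (vElt f κ δ a (b - Pi.single k 1) j)
        = ↑(xU f κ k)⁻¹ * vElt f κ δ a b j := by
      rw [← h1, Units.inv_mul_cancel_left]
    have h3 := congrArg (OXmap f κ κ ((τN k).symm) (hτNC' k)) h2
    rw [hinvN, map_mul, OXmap_xU_inv] at h3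
    exact h3.symm
  have inv3 : ∀ i, ∀ g ∈ VA f κ δ,
      (↑(fU f κ i)⁻¹ : OX f κ) * OXmap f κ κ (τS i) (hτSC i) g ∈ VA f κ δ := by
    intro i
    refine VA_invariant f κ δ (τS i) (hτSC i) _ fun a b j => ?_
    rw [key_s i a b j]
    exact vElt_mem_VA f κ δ _ _ _
  have inv4 : ∀ i, ∀ g ∈ VA f κ δ,
      OXmap f κ κ ((τS i).symm) (hτSC' i) (↑(fU f κ i) * g) ∈ VA f κ δ := by
    intro i g hg
    rw [map_mul, OXmap_fU_val]
    refine VA_invariant f κ δ ((τS i).symm) (hτSC' i) _ (fun a b j => ?_) g hg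
    rw [key_s' i a b j]
    exact vElt_mem_VA f κ δ _ _ _
  have inv5 : ∀ k, ∀ g ∈ VA f κ δ,
      (↑(xU f κ k) : OX f κ) * OXmap f κ κ (τN k) (hτNC k) g ∈ VA f κ δ := by
    intro k
    refine VA_invariant f κ δ (τN k) (hτNC k) _ fun a b j => ?_
    rw [key_n k a b j]
    exact vElt_mem_VA f κ δ _ _ _
  have inv6 : ∀ k, ∀ g ∈ VA f κ δ,
      OXmap f κ κ ((τN k).symm) (hτNC' k) ((↑(xU f κ k)⁻¹ : OX f κ) * g) ∈ VA f κ δ := by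
    intro k g hg
    rw [map_mul, OXmap_xU_inv]
    refine VA_invariant f κ δ ((τN k).symm) (hτNC' k) _ (fun a b j => ?_) g hg
    rw [key_n' k a b j]
    exact vElt_mem_VA f κ δ _ _ _
  refine ⟨key_s, key_n, inv3, inv4, inv5, inv6, ?_, ?_, ?_, ?_⟩
  · intro i g hg
    have heq : OXmap f κ κ ((τS i).symm) (hτSC' i)
        (↑(fU f κ i) * ((↑(fU f κ i)⁻¹ : OX f κ) * OXmap f κ κ (τS i) (hτSC i) g)) = g := by
      rw [Units.mul_inv_cancel_left, hinvS]
    have h := inv4 i _ hg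
    rwa [heq] at h
  · intro i h
    refine ⟨OXmap f κ κ ((τS i).symm) (hτSC' i) (↑(fU f κ i) * h), ?_⟩
    rw [hinvS', Units.inv_mul_cancel_left, sub_self]
    exact (VA f κ δ).zero_mem
  · intro k g hg
    have heq : OXmap f κ κ ((τN k).symm) (hτNC' k)
        ((↑(xU f κ k)⁻¹ : OX f κ) * ((↑(xU f κ k) : OX f κ) * OXmap f κ κ (τN k) (hτNC k) g)) = g := by
      rw [Units.inv_mul_cancel_left, hinvN]
    have h := inv6 k _ hg
    rwa [heq] at h
  · intro k h
    refine ⟨OXmap f κ κ ((τN k).symm) (hτNC' k) ((↑(xU f κ k)⁻¹ : OX f κ) * h), ?_⟩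
    rw [hinvN', Units.mul_inv_cancel_left, sub_self]
    exact (VA f κ δ).zero_mem


end
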